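/- Let G be a directed acyclic graph with s, t ∈ V(G). For an edge e = (u,v), define OPT[e] as the minimum size of a forcing set S for s-v paths with e ∈ S, and OPT[s] = 0, OPT[v] = min over in-edges e of v of OPT[e]. Then OPT[e] = min{ OPT[w] : w ∈ V(G), w ↝! u } + 1, where w ↝! u means there is exactly one path from w to u in G. -/

import Mathlib

variable {V : Type*}

/-- `l` is the vertex list of a directed simple path from `u` to `v` using edges in `E`. -/
def IsPathOn (E : Set (V × V)) (u v : V) (l : List V) : Prop :=
  l ≠ [] ∧ l.Chain' (fun a b => (a, b) ∈ E) ∧ l.Nodup ∧ l.head? = some u ∧ l.getLast? = some v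

/-- The list of edges of a path, in order. -/
def pathEdges (l : List V) : List (V × V) := l.zip l.tail

/-- A directed graph (given by its edge set) is acyclic. -/
def Acyclic (E : Set (V × V)) : Prop :=
  ∀ x : V, ¬ Relation.TransGen (fun a b => (a, b) ∈ E) x x

/-- There is exactly one directed path from `u` to `v` (`u ↝! v`). -/
def UniquePath (E : Set (V × V)) (u v : V) : Prop :=
  ∃! l : List V, IsPathOn E u v l

/-- `S` is a forcing set for the `s`-`v` paths: exactly one `s`-`v` path contains all
edges of `S`. -/
def ForcingSet (E : Set (V × V)) (s v : V) (S : Finset (V × V)) : Prop :=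
  ∃! l : List V, IsPathOn E s v l ∧ ∀ e ∈ S, e ∈ pathEdges l

/-- `OPT[e]` for an edge `e = (u, v)`: the minimum size of a forcing set `S` for the
`s`-`v` paths with `e ∈ S`. -/
noncomputable def OPTe (E : Set (V × V)) (s : V) (e : V × V) : ℕ :=
  sInf {n : ℕ | ∃ S : Finset (V × V), e ∈ S ∧ ForcingSet E s e.2 S ∧ S.card = n}

/-- `OPT[v]`: zero for `v = s`, and otherwise the minimum of `OPT[(u, v)]` over in-edges
`(u, v)` of `v`. -/
noncomputable def OPTv [DecidableEq V] (E : Set (V × V)) (s : V) (v : V) : ℕ :=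
  if v = s then 0 else sInf {n : ℕ | ∃ u : V, (u, v) ∈ E ∧ n = OPTe E s (u, v)}

section lemmas
variable {E : Set (V × V)}

local notation "R" => (fun a b => (a, b) ∈ E)

lemma reach_head : ∀ {l : List V}, l.Chain' R → ∀ {a x : V}, l.head? = some a → x ∈ l →
    Relation.ReflTransGen R a x := by
  intro l
  induction l with
  | nil => intro _ a x h; simp at h
  | cons b t ih =>
    intro hc a x hh hx
    simp only [List.head?_cons, Option.some.injEq] at hh
    subst hh
    rcases List.mem_cons.mp hx with rfl | hx
    · exact Relation.ReflTransGen.refl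
    · rcases t with _ | ⟨c, t'⟩
      · simp at hx
      · rcases List.isChain_cons_cons.mp hc with ⟨hbc, hc'⟩
        exact Relation.ReflTransGen.head hbc (ih hc' rfl hx)

lemma reach_last {l : List V} (hc : l.Chain' R) {x b : V} (hx : x ∈ l)
    (hb : l.getLast? = some b) : Relation.ReflTransGen R x b := by
  have hc' : l.reverse.Chain' (flip R) := by
    rw [← List.reverse_reverse l] at hc
    exact (List.isChain_reverse).mp hc
  have hh : l.reverse.head? = some b := by rw [List.head?_reverse]; exact hb
  have := reach_head (E := {p | (p.2, p.1) ∈ E}) ?_ hh (List.mem_reverse.mpr hx)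
  · exact (Relation.reflTransGen_swap).mp this
  · exact hc'

lemma acyclic_antisymm (hacyc : Acyclic E) {a b : V} (hab : Relation.ReflTransGen R a b)
    (hba : Relation.ReflTransGen R b a) : a = b := by
  rcases Relation.reflTransGen_iff_eq_or_transGen.mp hab with h | h
  · exact h.symm
  · exact absurd (h.trans_left hba) (hacyc a)

lemma path_total {s v : V} {l : List V} (hp : IsPathOn E s v l) {a b : V}
    (ha : a ∈ l) (hb : b ∈ l) :
    Relation.ReflTransGen R a b ∨ Relation.ReflTransGen R b a := by
  obtain ⟨l₁, l₂, rfl⟩ := List.append_of_mem ha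
  rcases List.mem_append.mp hb with hb | hb
  · obtain ⟨m₁, m₂, rfl⟩ := List.append_of_mem hb
    right
    have hsuf : (b :: (m₂ ++ a :: l₂)).Chain' R := by
      apply hp.2.1.suffix
      exact ⟨m₁, by simp⟩
    exact reach_head hsuf rfl (by simp)
  · left
    have hsuf : (a :: l₂).Chain' R := hp.2.1.suffix ⟨l₁, rfl⟩
    exact reach_head hsuf rfl hb

lemma pathEdges_cons_cons (a b : V) (l : List V) :
    pathEdges (a :: b :: l) = (a, b) :: pathEdges (b :: l) := rfl

lemma mem_pathEdges_iff {e : V × V} {l : List V} :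
    e ∈ pathEdges l ↔ ∃ l₁ l₂, l = l₁ ++ e.1 :: e.2 :: l₂ := by
  constructor
  · intro h
    induction l with
    | nil => simp [pathEdges] at h
    | cons a t ih =>
      rcases t with _ | ⟨b, t'⟩
      · simp [pathEdges] at h
      · rw [pathEdges_cons_cons, List.mem_cons] at h
        rcases h with h | h
        · subst h; exact ⟨[], t', rfl⟩
        · obtain ⟨l₁, l₂, hl⟩ := ih h
          exact ⟨a :: l₁, l₂, by simp [hl]⟩
  · rintro ⟨l₁, l₂, rfl⟩
    induction l₁ with
    | nil => simp [pathEdges_cons_cons]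
    | cons a t ih =>
      have hne : t ++ e.1 :: e.2 :: l₂ ≠ [] := by simp
      rcases hc : t ++ e.1 :: e.2 :: l₂ with _ | ⟨c, rest⟩
      · exact absurd hc hne
      · rw [List.cons_append, hc, pathEdges_cons_cons, List.mem_cons]
        right; rw [← hc]; exact ih

lemma fst_mem_of_mem_pathEdges {e : V × V} {l : List V} (h : e ∈ pathEdges l) : e.1 ∈ l := by
  obtain ⟨l₁, l₂, rfl⟩ := mem_pathEdges_iff.mp h; simp

lemma snd_mem_of_mem_pathEdges {e : V × V} {l : List V} (h : e ∈ pathEdges l) : e.2 ∈ l := by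
  obtain ⟨l₁, l₂, rfl⟩ := mem_pathEdges_iff.mp h; simp

lemma mem_E_of_mem_pathEdges {e : V × V} {l : List V} (hc : l.Chain' R)
    (h : e ∈ pathEdges l) : (e.1, e.2) ∈ E := by
  obtain ⟨l₁, l₂, rfl⟩ := mem_pathEdges_iff.mp h
  have : (e.1 :: e.2 :: l₂).Chain' R := hc.suffix ⟨l₁, rfl⟩
  exact (List.isChain_cons_cons.mp this).1

lemma pathEdges_append : ∀ {l₁ l₂ : List V}, l₁.getLast? = l₂.head? → l₂ ≠ [] →
    pathEdges (l₁ ++ l₂.tail) = pathEdges l₁ ++ pathEdges l₂ := by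
  intro l₁
  induction l₁ with
  | nil => intro l₂ h hne; rw [List.getLast?_nil] at h; exact absurd (List.head?_eq_none_iff.mp h.symm) hne
  | cons a t ih =>
    intro l₂ h hne
    rcases t with _ | ⟨b, t'⟩
    · rcases l₂ with _ | ⟨c, t₂⟩
      · exact absurd rfl hne
      · simp only [List.getLast?_singleton, List.head?_cons, Option.some.injEq] at h
        subst h
        simp [pathEdges]
    · rw [List.getLast?_cons_cons] at h
      have := ih (l₂ := l₂) h hne
      simp only [List.cons_append] at this ⊢
      rw [pathEdges_cons_cons, pathEdges_cons_cons, this]; rfl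


lemma path_singleton {x : V} {l : List V} (hp : IsPathOn E x x l) : l = [x] := by
  obtain ⟨hne, _, hnd, hh, hl⟩ := hp
  rcases l with _ | ⟨a, t⟩
  · exact absurd rfl hne
  · simp only [List.head?_cons, Option.some.injEq] at hh
    rcases t with _ | ⟨b, t'⟩
    · rw [hh]
    · exfalso
      rw [List.getLast?_cons_cons,
        List.getLast?_eq_getLast (l := b :: t') (by simp), Option.some.injEq] at hl
      have hmem : a ∈ b :: t' := by
        rw [hh, ← hl]; exact List.getLast_mem _
      exact (List.nodup_cons.mp hnd).1 hmem

lemma path_unique_of_edges_subset : ∀ {l : List V} {s w : V} {m : List V},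
    IsPathOn E s w l → IsPathOn E s w m →
    (∀ e ∈ pathEdges l, e ∈ pathEdges m) → m = l := by
  intro l
  induction l with
  | nil => intro s w m hl; exact absurd rfl hl.1
  | cons a t ih =>
    intro s w m hl hm hsub
    have ha : a = s := by
      have := hl.2.2.2.1; simp only [List.head?_cons, Option.some.injEq] at this; exact this
    subst ha
    rcases t with _ | ⟨b, t'⟩
    · have hw : w = a := by
        have := hl.2.2.2.2; simp only [List.getLast?_singleton, Option.some.injEq] at this
        exact this.symm
      subst hw
      exact path_singleton hm
    · have hed : (a, b) ∈ pathEdges m := hsub (a, b) (by rw [pathEdges_cons_cons]; simp)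
      obtain ⟨m₁, m₂, hm12⟩ := mem_pathEdges_iff.mp hed
      simp only at hm12
      have hm1 : m₁ = [] := by
        rcases m₁ with _ | ⟨c, m₁'⟩
        · rfl
        · exfalso
          have hh : c = a := by
            have := hm.2.2.2.1
            rw [hm12] at this
            simp only [List.cons_append, List.head?_cons, Option.some.injEq] at this
            exact this
          subst hh
          have := hm.2.1  -- nodup? no that's chain'. fix below
          have hnd := hm.2.2.1
          rw [hm12] at hnd
          rw [List.nodup_append] at hnd
          exact hnd.2.2 _ List.mem_cons_self _ List.mem_cons_self rfl
      subst hm1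
      simp only [List.nil_append] at hm12
      subst hm12
      -- apply ih with path b :: t' and b :: m₂
      have hlb : IsPathOn E b w (b :: t') :=
        ⟨by simp, hl.2.1.tail, (List.nodup_cons.mp hl.2.2.1).2, rfl,
          by rw [← List.getLast?_cons_cons (a := a)]; exact hl.2.2.2.2⟩
      have hmb : IsPathOn E b w (b :: m₂) :=
        ⟨by simp, hm.2.1.tail, (List.nodup_cons.mp hm.2.2.1).2, rfl,
          by rw [← List.getLast?_cons_cons (a := a)]; exact hm.2.2.2.2⟩
      have hsub' : ∀ e ∈ pathEdges (b :: t'), e ∈ pathEdges (b :: m₂) := by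
        intro e hme
        have : e ∈ pathEdges (a :: b :: t') := by rw [pathEdges_cons_cons]; simp [hme]
        have h2 := hsub e this
        rw [pathEdges_cons_cons, List.mem_cons] at h2
        rcases h2 with h2 | h2
        · exfalso
          have h1 : e.1 ∈ b :: t' := fst_mem_of_mem_pathEdges hme
          rw [h2] at h1
          exact (List.nodup_cons.mp hl.2.2.1).1 h1
        · exact h2
      have := ih hlb hmb hsub'
      rw [this]

lemma forcing_full_edges {s w : V} {l : List V} [DecidableEq V] (hp : IsPathOn E s w l) :
    ∃! m : List V, IsPathOn E s w m ∧ ∀ e ∈ (pathEdges l).toFinset, e ∈ pathEdges m := by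
  refine ⟨l, ⟨hp, fun e he => List.mem_toFinset.mp he⟩, ?_⟩
  rintro m ⟨hm, hsub⟩
  exact path_unique_of_edges_subset hp hm (fun e he => hsub e (List.mem_toFinset.mpr he))

lemma path_append (hacyc : Acyclic E) {s w v : V} {P Q : List V}
    (hP : IsPathOn E s w P) (hQ : IsPathOn E w v Q) :
    IsPathOn E s v (P ++ Q.tail) ∧ pathEdges (P ++ Q.tail) = pathEdges P ++ pathEdges Q := by
  have hlh : P.getLast? = Q.head? := by rw [hP.2.2.2.2, hQ.2.2.2.1]
  constructor
  · rcases Q with _ | ⟨q, tq⟩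
    · exact absurd rfl hQ.1
    have hq : w = q := by
      have := hQ.2.2.2.1; simp only [List.head?_cons, Option.some.injEq] at this
      exact this.symm
    subst hq
    refine ⟨by simp [hP.1], ?_, ?_, ?_, ?_⟩
    · apply List.isChain_append.mpr
      refine ⟨hP.2.1, hQ.2.1.tail, ?_⟩
      intro x hx y hy
      rw [hP.2.2.2.2, Option.mem_some_iff] at hx
      subst hx
      rcases tq with _ | ⟨c, tq'⟩
      · simp at hy
      · simp only [List.tail_cons, List.head?_cons, Option.mem_some_iff] at hy
        subst hy
        exact (List.isChain_cons_cons.mp hQ.2.1).1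
    · rw [List.nodup_append]
      refine ⟨hP.2.2.1, (List.nodup_cons.mp hQ.2.2.1).2, ?_⟩
      intro z hzP z' hzQ hzz
      subst hzz
      have h1 : Relation.ReflTransGen (fun a b => (a, b) ∈ E) z w :=
        reach_last hP.2.1 hzP hP.2.2.2.2
      have h2 : Relation.ReflTransGen (fun a b => (a, b) ∈ E) w z :=
        reach_head hQ.2.1 hQ.2.2.2.1 (List.mem_cons_of_mem _ hzQ)
      have := acyclic_antisymm hacyc h1 h2
      subst this
      exact (List.nodup_cons.mp hQ.2.2.1).1 hzQ
    · rw [List.head?_append_of_ne_nil _ hP.1]; exact hP.2.2.2.1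
    · rcases tq with _ | ⟨c, tq'⟩
      · simp only [List.tail_cons, List.append_nil]
        rw [hP.2.2.2.2]
        have := hQ.2.2.2.2
        simp only [List.getLast?_singleton, Option.some.injEq] at this
        rw [this]
      · simp only [List.tail_cons]
        rw [List.getLast?_append]
        have : (c :: tq').getLast? = some v := by
          rw [← List.getLast?_cons_cons (a := w)]; exact hQ.2.2.2.2
        rw [this]; rfl
  · exact pathEdges_append hlh hQ.1

lemma edge_ne (hacyc : Acyclic E) {a b : V} (h : (a, b) ∈ E) : a ≠ b := by
  rintro rfl
  exact hacyc a (Relation.TransGen.single h)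

lemma path_extend (hacyc : Acyclic E) {s u v : V} {l : List V}
    (hp : IsPathOn E s u l) (he : (u, v) ∈ E) :
    IsPathOn E s v (l ++ [v]) ∧ pathEdges (l ++ [v]) = pathEdges l ++ [(u, v)] := by
  have hQ : IsPathOn E u v [u, v] := by
    refine ⟨by simp, ?_, ?_, rfl, rfl⟩
    · exact List.isChain_cons_cons.mpr ⟨he, List.isChain_singleton v⟩
    · simp [edge_ne hacyc he]
  have := path_append hacyc hp hQ
  simpa [pathEdges] using this

lemma path_exists (hacyc : Acyclic E) {s x : V}
    (h : Relation.ReflTransGen (fun a b => (a, b) ∈ E) s x) : ∃ l, IsPathOn E s x l := by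
  induction h with
  | refl => exact ⟨[s], by simp, List.isChain_singleton s, by simp, rfl, rfl⟩
  | tail hab hbc ih =>
    obtain ⟨l, hl⟩ := ih
    exact ⟨l ++ [_], (path_extend hacyc hl hbc).1⟩

lemma path_split {s v w : V} {l : List V} (hp : IsPathOn E s v l) (hw : w ∈ l) :
    ∃ P Q, IsPathOn E s w P ∧ IsPathOn E w v Q ∧ l = P ++ Q.tail ∧
      pathEdges l = pathEdges P ++ pathEdges Q := by
  obtain ⟨l₁, l₂, rfl⟩ := List.append_of_mem hw
  refine ⟨l₁ ++ [w], w :: l₂, ?_, ?_, by simp, ?_⟩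
  · refine ⟨by simp, ?_, ?_, ?_, List.getLast?_concat⟩
    · exact hp.2.1.prefix ⟨l₂, by simp⟩
    · exact ((List.nodup_append).mp (by simpa using hp.2.2.1)).1
    · rw [← List.head?_append_of_ne_nil (l₂ := l₂) _ (by simp)]
      simpa using hp.2.2.2.1
  · refine ⟨by simp, ?_, ?_, rfl, ?_⟩
    · exact hp.2.1.suffix ⟨l₁, rfl⟩
    · exact ((List.nodup_append).mp hp.2.2.1).2.1
    · have h2 := hp.2.2.2.2
      rw [List.getLast?_append] at h2
      rw [List.getLast?_eq_getLast (l := w :: l₂) (by simp)] at h2 ⊢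
      simpa using h2
  · have : l₁ ++ w :: l₂ = (l₁ ++ [w]) ++ (w :: l₂).tail := by simp
    rw [this]
    exact pathEdges_append (by simp [List.getLast?_concat]) (by simp)


lemma path_last_edge {s x y : V} {l : List V} (hp : IsPathOn E s y l)
    (he : (x, y) ∈ pathEdges l) :
    ∃ l₀, l = l₀ ++ [y] ∧ IsPathOn E s x l₀ ∧ pathEdges l = pathEdges l₀ ++ [(x, y)] := by
  obtain ⟨l₁, l₂, hl⟩ := mem_pathEdges_iff.mp he
  simp only at hl
  have hl₂ : l₂ = [] := by
    by_contra hne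
    have hnd : (y :: l₂).Nodup :=
      List.Nodup.sublist (List.IsSuffix.sublist ⟨l₁ ++ [x], by rw [hl]; simp⟩) hp.2.2.1
    have hlast := hp.2.2.2.2
    have heq : l₁ ++ x :: y :: l₂ = (l₁ ++ [x]) ++ y :: l₂ := by simp
    rw [hl, heq, List.getLast?_append,
      List.getLast?_eq_getLast (l := y :: l₂) (by simp)] at hlast
    rw [List.getLast_cons hne] at hlast
    have hy : l₂.getLast hne = y := by
      rw [show ((some (l₂.getLast hne)).or (l₁ ++ [x]).getLast?) = some (l₂.getLast hne)
        from rfl, Option.some.injEq] at hlast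
      exact hlast
    have hmem : y ∈ l₂ := hy ▸ List.getLast_mem hne
    exact (List.nodup_cons.mp hnd).1 hmem
  subst hl₂
  refine ⟨l₁ ++ [x], by rw [hl]; simp, ?_, ?_⟩
  · refine ⟨by simp, ?_, ?_, ?_, List.getLast?_concat⟩
    · exact hp.2.1.prefix ⟨[y], by rw [hl]; simp⟩
    · exact List.Nodup.sublist (List.IsPrefix.sublist ⟨[y], by rw [hl]; simp⟩) hp.2.2.1
    · have h0 := hp.2.2.2.1
      rw [hl] at h0
      rw [← List.head?_append_of_ne_nil (l₁ ++ [x]) (l₂ := [y]) (by simp)]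
      simpa using h0
  · have h1 : l = (l₁ ++ [x]) ++ ([x, y] : List V).tail := by rw [hl]; simp
    rw [h1, pathEdges_append (by simp [List.getLast?_concat]) (by simp)]
    rfl

lemma no_edge_in_suffix (hacyc : Acyclic E) {w v : V} {Q : List V} {e : V × V}
    (hQ : IsPathOn E w v Q) (heE : (e.1, e.2) ∈ E)
    (hre : Relation.ReflTransGen (fun a b => (a, b) ∈ E) e.2 w)
    (heQ : e ∈ pathEdges Q) : False := by
  have h1 : e.1 ∈ Q := fst_mem_of_mem_pathEdges heQ
  have h2 : Relation.ReflTransGen (fun a b => (a, b) ∈ E) w e.1 :=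
    reach_head hQ.2.1 hQ.2.2.2.1 h1
  exact hacyc e.1 ((Relation.TransGen.head' heE hre).trans_left h2)

lemma exists_rel_max {α : Type*} [DecidableEq α] {r : α → α → Prop}
    (htrans : Transitive r) (T : Finset α) :
    T.Nonempty → (∀ a ∈ T, ∀ b ∈ T, r a b ∨ r b a) → ∃ m ∈ T, ∀ a ∈ T, r a m := by
  induction T using Finset.induction_on with
  | empty => intro h; exact absurd h (by simp)
  | insert a T hx ih =>
    intro _ htot
    by_cases hT : T.Nonempty
    · obtain ⟨m, hm, hmax⟩ := ih hT (fun x hx y hy =>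
        htot _ (Finset.mem_insert_of_mem hx) _ (Finset.mem_insert_of_mem hy))
      rcases htot a (Finset.mem_insert_self _ _) m (Finset.mem_insert_of_mem hm) with h | h
      · refine ⟨m, Finset.mem_insert_of_mem hm, ?_⟩
        intro z hz
        rcases Finset.mem_insert.mp hz with rfl | hz
        · exact h
        · exact hmax z hz
      · refine ⟨a, Finset.mem_insert_self _ _, ?_⟩
        intro z hz
        rcases Finset.mem_insert.mp hz with rfl | hz
        · rcases htot z (Finset.mem_insert_self _ _) z (Finset.mem_insert_self _ _) with h' | h'
          · exact h'
          · exact h'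
        · exact htrans (hmax z hz) h
    · rw [Finset.not_nonempty_iff_eq_empty] at hT
      subst hT
      refine ⟨a, Finset.mem_insert_self _ _, ?_⟩
      intro z hz
      simp only [Finset.mem_insert, Finset.notMem_empty, or_false] at hz
      subst hz
      rcases htot z (Finset.mem_insert_self _ _) z (Finset.mem_insert_self _ _) with h' | h'
      · exact h'
      · exact h'

lemma no_edge_into_source (hacyc : Acyclic E) {s x : V}
    (hr : Relation.ReflTransGen (fun a b => (a, b) ∈ E) s x) (he : (x, s) ∈ E) : False :=
  hacyc s (Relation.TransGen.tail' hr he)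

lemma uniquePath_self (x : V) : ∃! l : List V, IsPathOn E x x l := by
  refine ⟨[x], ⟨by simp, List.isChain_singleton x, by simp, rfl, rfl⟩, ?_⟩
  intro m hm
  exact path_singleton hm

lemma opte_set_nonempty [DecidableEq V] (hacyc : Acyclic E) {s x w : V}
    (hr : Relation.ReflTransGen (fun a b => (a, b) ∈ E) s x) (he : (x, w) ∈ E) :
    {n : ℕ | ∃ S : Finset (V × V), (x, w) ∈ S ∧
      (∃! m : List V, IsPathOn E s w m ∧ ∀ e ∈ S, e ∈ pathEdges m) ∧ S.card = n}.Nonempty := by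
  obtain ⟨l, hl⟩ := path_exists hacyc hr
  obtain ⟨hp', hpe⟩ := path_extend hacyc hl he
  refine ⟨(pathEdges (l ++ [w])).toFinset.card, (pathEdges (l ++ [w])).toFinset, ?_,
    forcing_full_edges hp', rfl⟩
  rw [List.mem_toFinset, hpe]
  simp

end lemmas

section main
variable {E : Set (V × V)}

lemma opte_attained [DecidableEq V] (hacyc : Acyclic E) {s x w : V}
    (hr : Relation.ReflTransGen (fun a b => (a, b) ∈ E) s x) (he : (x, w) ∈ E) :
    ∃ S : Finset (V × V), (x, w) ∈ S ∧ ForcingSet E s w S ∧ S.card = OPTe E s (x, w) := by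
  have hne := opte_set_nonempty (s := s) hacyc hr he
  exact Nat.sInf_mem hne

end main

/-- In a DAG in which every vertex is reachable from `s` and reaches `t`,
for every edge `e = (u, v)`: `OPT[e] = min { OPT[w] : w ↝! u } + 1`. -/
theorem stmt19 [Fintype V] [DecidableEq V] (E : Set (V × V)) (hacyc : Acyclic E) (s t : V)
    (hreach : ∀ x : V, Relation.ReflTransGen (fun a b => (a, b) ∈ E) s x ∧
      Relation.ReflTransGen (fun a b => (a, b) ∈ E) x t)
    (u v : V) (he : (u, v) ∈ E) :
    OPTe E s (u, v) = sInf {n : ℕ | ∃ x : V, UniquePath E x u ∧ n = OPTv E s x} + 1 := by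
  classical
  let A : Set ℕ := {n : ℕ | ∃ S : Finset (V × V), (u, v) ∈ S ∧ ForcingSet E s v S ∧ S.card = n}
  let B : Set ℕ := {n : ℕ | ∃ x : V, UniquePath E x u ∧ n = OPTv E s x}
  have hOPTeA : OPTe E s (u, v) = sInf A := rfl
  have hBne : B.Nonempty := ⟨OPTv E s u, u, uniquePath_self u, rfl⟩
  have hAne : A.Nonempty := by
    obtain ⟨S, h1, h2, _⟩ := opte_attained hacyc (hreach u).1 he
    exact ⟨S.card, S, h1, h2, rfl⟩
  have hle1 : sInf A ≤ sInf B + 1 := by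
    obtain ⟨w, hwu, hw⟩ := Nat.sInf_mem hBne
    rw [hw]
    by_cases hws : w = s
    · rw [hws] at hwu ⊢
      obtain ⟨Q, hQ, hQun⟩ := hwu
      obtain ⟨hp', hpe⟩ := path_extend hacyc hQ he
      have hF : ForcingSet E s v {(u, v)} := by
        refine ⟨Q ++ [v], ⟨hp', ?_⟩, ?_⟩
        · intro e he'
          simp only [Finset.mem_singleton] at he'
          subst he'
          rw [hpe]; simp
        · rintro m ⟨hm, hms⟩
          have huv : (u, v) ∈ pathEdges m := hms _ (Finset.mem_singleton_self _)
          obtain ⟨m₀, hm₀eq, hm₀, _⟩ := path_last_edge hm huv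
          rw [hm₀eq, hQun m₀ hm₀]
      have h1A : (1 : ℕ) ∈ A := ⟨{(u, v)}, Finset.mem_singleton_self _, hF, Finset.card_singleton _⟩
      have hOv : OPTv E s s = 0 := by simp [OPTv]
      calc sInf A ≤ 1 := Nat.sInf_le h1A
        _ = OPTv E s s + 1 := by rw [hOv]
    · obtain ⟨Qwu, hQwu, hQwu_un⟩ := hwu
      have hOPTvw : OPTv E s w = sInf {n | ∃ x, (x, w) ∈ E ∧ n = OPTe E s (x, w)} := by
        rw [OPTv, if_neg hws]
      have hCne : {n : ℕ | ∃ x, (x, w) ∈ E ∧ n = OPTe E s (x, w)}.Nonempty := by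
        rcases Relation.ReflTransGen.cases_tail (hreach w).1 with h | ⟨c, _, hc⟩
        · exact absurd h hws
        · exact ⟨OPTe E s (c, w), c, hc, rfl⟩
      obtain ⟨x₀, hx₀E, hx₀⟩ := Nat.sInf_mem hCne
      obtain ⟨S₀, hx₀S₀, hS₀f, hS₀card⟩ := opte_attained hacyc (hreach x₀).1 hx₀E
      obtain ⟨l₀, ⟨hl₀p, hl₀sub⟩, hl₀un⟩ := hS₀f
      have huvS₀ : (u, v) ∉ S₀ := by
        intro hmem
        have hve : (u, v) ∈ pathEdges l₀ := hl₀sub _ hmem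
        have hvl₀ : v ∈ l₀ := snd_mem_of_mem_pathEdges hve
        have h1 := reach_last hl₀p.2.1 hvl₀ hl₀p.2.2.2.2
        have hwQ : w ∈ Qwu := List.mem_of_mem_head? (Option.mem_def.mpr hQwu.2.2.2.1)
        have h2 := reach_last hQwu.2.1 hwQ hQwu.2.2.2.2
        exact hacyc v (Relation.TransGen.tail' (h1.trans h2) he)
      obtain ⟨hLp, hLe⟩ := path_append hacyc hl₀p hQwu
      obtain ⟨hlp, hle⟩ := path_extend hacyc hLp he
      have hF : ForcingSet E s v (insert (u, v) S₀) := by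
        refine ⟨(l₀ ++ Qwu.tail) ++ [v], ⟨hlp, ?_⟩, ?_⟩
        · intro e he'
          rw [hle, hLe]
          rcases Finset.mem_insert.mp he' with rfl | he'
          · simp
          · have := hl₀sub e he'
            simp [this]
        · rintro m ⟨hm, hms⟩
          have huv : (u, v) ∈ pathEdges m := hms _ (Finset.mem_insert_self _ _)
          obtain ⟨m₀, hm₀eq, hm₀, hm₀e⟩ := path_last_edge hm huv
          have hS₀m₀ : ∀ e ∈ S₀, e ∈ pathEdges m₀ := by
            intro e heS
            have h1 := hms e (Finset.mem_insert_of_mem heS)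
            rw [hm₀e] at h1
            rcases List.mem_append.mp h1 with h1 | h1
            · exact h1
            · simp only [List.mem_singleton] at h1
              subst h1
              exact absurd heS huvS₀
          have hwm₀ : w ∈ m₀ := snd_mem_of_mem_pathEdges (hS₀m₀ _ hx₀S₀)
          obtain ⟨P, Q', hP, hQ', hm₀split, hm₀edges⟩ := path_split hm₀ hwm₀
          have hS₀P : ∀ e ∈ S₀, e ∈ pathEdges P := by
            intro e heS
            have h1 := hS₀m₀ e heS
            rw [hm₀edges] at h1
            rcases List.mem_append.mp h1 with h1 | h1
            · exact h1
            · exact absurd h1 (fun h1 => no_edge_in_suffix hacyc hQ'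
                (mem_E_of_mem_pathEdges hl₀p.2.1 (hl₀sub e heS))
                (reach_last hl₀p.2.1 (snd_mem_of_mem_pathEdges (hl₀sub e heS)) hl₀p.2.2.2.2) h1)
          have hPl₀ : P = l₀ := hl₀un P ⟨hP, hS₀P⟩
          have hQQ : Q' = Qwu := hQwu_un Q' hQ'
          rw [hm₀eq, hm₀split, hPl₀, hQQ]
      have h1A : S₀.card + 1 ∈ A :=
        ⟨insert (u, v) S₀, Finset.mem_insert_self _ _, hF, Finset.card_insert_of_notMem huvS₀⟩
      calc sInf A ≤ S₀.card + 1 := Nat.sInf_le h1A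
        _ = OPTe E s (x₀, w) + 1 := by rw [hS₀card]
        _ = OPTv E s w + 1 := by rw [hOPTvw, hx₀]
  have hle2 : sInf B + 1 ≤ sInf A := by
    obtain ⟨S, huvS, hSf, hScard⟩ := Nat.sInf_mem hAne
    obtain ⟨l, ⟨hlp, hlsub⟩, hlun⟩ := hSf
    obtain ⟨l₀, hleq, hl₀p, hledges⟩ := path_last_edge hlp (hlsub _ huvS)
    have hS'sub : ∀ e ∈ S.erase (u, v), e ∈ pathEdges l₀ := by
      intro e heS
      have h1 := hlsub e (Finset.mem_of_mem_erase heS)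
      rw [hledges] at h1
      rcases List.mem_append.mp h1 with h1 | h1
      · exact h1
      · simp only [List.mem_singleton] at h1
        exact absurd h1 (Finset.ne_of_mem_erase heS)
    by_cases hS' : (S.erase (u, v)).Nonempty
    · obtain ⟨⟨x₁, w⟩, hestar, hmax⟩ := exists_rel_max
        (r := fun e f : V × V => Relation.ReflTransGen (fun a b => (a, b) ∈ E) e.2 f.2)
        (fun _ _ _ hab hbc => hab.trans hbc) (S.erase (u, v)) hS'
        (fun a ha b hb => path_total hl₀p (snd_mem_of_mem_pathEdges (hS'sub a ha))
          (snd_mem_of_mem_pathEdges (hS'sub b hb)))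
      have hestarE : (x₁, w) ∈ E := mem_E_of_mem_pathEdges hl₀p.2.1 (hS'sub _ hestar)
      have hwl₀ : w ∈ l₀ := snd_mem_of_mem_pathEdges (hS'sub _ hestar)
      have hws : w ≠ s := fun h => no_edge_into_source hacyc (hreach x₁).1 (h ▸ hestarE)
      obtain ⟨P, Q, hP, hQ, hsplit, hedges⟩ := path_split hl₀p hwl₀
      have hS'P : ∀ e ∈ S.erase (u, v), e ∈ pathEdges P := by
        intro e heS
        rcases List.mem_append.mp (hedges ▸ hS'sub e heS) with h1 | h1
        · exact h1
        · exact absurd h1 (fun h1 => no_edge_in_suffix hacyc hQ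
            (mem_E_of_mem_pathEdges hl₀p.2.1 (hS'sub e heS)) (hmax e heS) h1)
      have hFw : ForcingSet E s w (S.erase (u, v)) := by
        refine ⟨P, ⟨hP, hS'P⟩, ?_⟩
        rintro m ⟨hm, hms⟩
        obtain ⟨hm1p, hm1e⟩ := path_append hacyc hm hQ
        obtain ⟨hm2p, hm2e⟩ := path_extend hacyc hm1p he
        have hcov : ∀ e ∈ S, e ∈ pathEdges ((m ++ Q.tail) ++ [v]) := by
          intro e heS
          rw [hm2e, hm1e]
          by_cases h : e = (u, v)
          · subst h; simp
          · have := hms e (Finset.mem_erase.mpr ⟨h, heS⟩)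
            simp [this]
        have hml := hlun _ ⟨hm2p, hcov⟩
        rw [hleq, hsplit] at hml
        exact List.append_cancel_right (List.append_cancel_right hml)
      have hupwu : UniquePath E w u := by
        refine ⟨Q, hQ, ?_⟩
        intro p hp
        obtain ⟨hp1p, hp1e⟩ := path_append hacyc hP hp
        obtain ⟨hp2p, hp2e⟩ := path_extend hacyc hp1p he
        have hcov : ∀ e ∈ S, e ∈ pathEdges ((P ++ p.tail) ++ [v]) := by
          intro e heS
          rw [hp2e, hp1e]
          by_cases h : e = (u, v)
          · subst h; simp
          · have := hS'P e (Finset.mem_erase.mpr ⟨h, heS⟩)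
            simp [this]
        have hml := hlun _ ⟨hp2p, hcov⟩
        rw [hleq, hsplit] at hml
        have h2 := List.append_cancel_left (List.append_cancel_right hml)
        have hpw : p = w :: p.tail := by
          rcases p with _ | ⟨a, tp⟩
          · exact absurd rfl hp.1
          · have h3 := hp.2.2.2.1
            simp only [List.head?_cons, Option.some.injEq] at h3
            rw [h3]; rfl
        have hQw : Q = w :: Q.tail := by
          rcases Q with _ | ⟨a, tq⟩
          · exact absurd rfl hQ.1
          · have h3 := hQ.2.2.2.1
            simp only [List.head?_cons, Option.some.injEq] at h3
            rw [h3]; rfl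
        rw [hpw, h2, ← hQw]
      have h1 : OPTe E s (x₁, w) ≤ (S.erase (u, v)).card :=
        Nat.sInf_le ⟨S.erase (u, v), hestar, hFw, rfl⟩
      have h2 : OPTv E s w ≤ OPTe E s (x₁, w) := by
        rw [OPTv, if_neg hws]
        exact Nat.sInf_le ⟨x₁, hestarE, rfl⟩
      have h3 : sInf B ≤ OPTv E s w := Nat.sInf_le ⟨w, hupwu, rfl⟩
      have h4 : sInf B ≤ (S.erase (u, v)).card := h3.trans (h2.trans h1)
      calc sInf B + 1 ≤ (S.erase (u, v)).card + 1 := by omega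
        _ = S.card := Finset.card_erase_add_one huvS
        _ = sInf A := hScard
    · have hSsub : ∀ e ∈ S, e = (u, v) := by
        intro e heS
        by_contra hne
        exact hS' ⟨e, Finset.mem_erase.mpr ⟨hne, heS⟩⟩
      have hup : UniquePath E s u := by
        refine ⟨l₀, hl₀p, ?_⟩
        intro m₀ hm₀
        obtain ⟨hmp, hme⟩ := path_extend hacyc hm₀ he
        have hml : m₀ ++ [v] = l := by
          refine hlun _ ⟨hmp, ?_⟩
          intro e heS
          rw [hme, hSsub e heS]
          simp
        rw [hleq] at hml
        exact List.append_cancel_right hml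
      have h0B : (0 : ℕ) ∈ B := ⟨s, hup, by simp [OPTv]⟩
      have hB0 : sInf B = 0 := Nat.le_zero.mp (Nat.sInf_le h0B)
      have hcard : 1 ≤ S.card := Finset.card_pos.mpr ⟨_, huvS⟩
      rw [hB0, ← hScard]
      omega
  rw [hOPTeA]
  exact le_antisymm hle1 hle2
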